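/- arXiv:2007.00446 — 4 statements merged into one kernel-verified Lean document; each statement's English description precedes it below -/
import Mathlib

section
/- Let d ≥ 2 be an integer and (ω₁, ω₂) ∈ 𝕊₁^{2d-1}. Then for all v₁, v₂, v₃ ∈ ℝ^d, writing (v₁*, v₂*, v₃*) = T_{ω₁,ω₂}(v₁, v₂, v₃), the following hold: (i) conservation of momentum: v₁* + v₂* + v₃* = v₁ + v₂ + v₃; (ii) conservation of energy: |v₁*|² + |v₂*|² + |v₃*|² = |v₁|² + |v₂|² + |v₃|²; (iii) conservation of relative velocity magnitudes: |v₁* − v₂*|² + |v₁* − v₃*|² + |v₂* − v₃*|² = |v₁ − v₂|² + |v₁ − v₃|² + |v₂ − v₃|²; (iv) micro-reversibility of the ternary cross-section: b₃(ω₁, ω₂, v₂* − v₁*, v₃* − v₁*) = −b₃(ω₁, ω₂, v₂ − v₁, v₃ − v₁); (v) T_{ω₁,ω₂} is a linear involution of ℝ^{3d} (T_{ω₁,ω₂} ∘ T_{ω₁,ω₂} = id), hence its determinant has absolute value 1 and T_{ω₁,ω₂} preserves Lebesgue measure on ℝ^{3d}. -/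
open MeasureTheory

/-- The ternary collisional transformation `T_{ω₁,ω₂} (v₁, v₂, v₃)`. -/
noncomputable def ternaryT {d : ℕ} (ω₁ ω₂ : EuclideanSpace ℝ (Fin d)) :
    EuclideanSpace ℝ (Fin d) × EuclideanSpace ℝ (Fin d) × EuclideanSpace ℝ (Fin d) →
      EuclideanSpace ℝ (Fin d) × EuclideanSpace ℝ (Fin d) × EuclideanSpace ℝ (Fin d) :=
  fun p =>
    let c : ℝ := ((inner ℝ ω₁ (p.2.1 - p.1) : ℝ) + (inner ℝ ω₂ (p.2.2 - p.1) : ℝ)) /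
      (1 + (inner ℝ ω₁ ω₂ : ℝ))
    (p.1 + c • (ω₁ + ω₂), p.2.1 - c • ω₁, p.2.2 - c • ω₂)

/-- The ternary cross-section `b₃(ω₁, ω₂, ν₁, ν₂)`. -/
noncomputable def ternaryB {d : ℕ} (ω₁ ω₂ ν₁ ν₂ : EuclideanSpace ℝ (Fin d)) : ℝ :=
  (inner ℝ ω₁ ν₁ : ℝ) + (inner ℝ ω₂ ν₂ : ℝ)

section Aux

variable {d : ℕ} (ω₁ ω₂ : EuclideanSpace ℝ (Fin d))

lemma ternaryT_apply (v₁ v₂ v₃ : EuclideanSpace ℝ (Fin d)) :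
    ternaryT ω₁ ω₂ (v₁, v₂, v₃) =
      (v₁ + (((inner ℝ ω₁ (v₂ - v₁) : ℝ) + (inner ℝ ω₂ (v₃ - v₁) : ℝ)) /
          (1 + (inner ℝ ω₁ ω₂ : ℝ))) • (ω₁ + ω₂),
        v₂ - (((inner ℝ ω₁ (v₂ - v₁) : ℝ) + (inner ℝ ω₂ (v₃ - v₁) : ℝ)) /
          (1 + (inner ℝ ω₁ ω₂ : ℝ))) • ω₁,
        v₃ - (((inner ℝ ω₁ (v₂ - v₁) : ℝ) + (inner ℝ ω₂ (v₃ - v₁) : ℝ)) /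
          (1 + (inner ℝ ω₁ ω₂ : ℝ))) • ω₂) := rfl

lemma ternary_den_pos (hω : ‖ω₁‖ ^ 2 + ‖ω₂‖ ^ 2 = 1) : (0 : ℝ) < 1 + (inner ℝ ω₁ ω₂ : ℝ) := by
  have h1 : |(inner ℝ ω₁ ω₂ : ℝ)| ≤ ‖ω₁‖ * ‖ω₂‖ := abs_real_inner_le_norm _ _
  have h2 := (abs_le.mp h1).1
  nlinarith [sq_nonneg (‖ω₁‖ - ‖ω₂‖)]

/-- Conservation of energy for the collision parametrized by a scalar `c`
satisfying the defining relation. -/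
lemma ternary_energy (v₁ v₂ v₃ : EuclideanSpace ℝ (Fin d)) (hω : ‖ω₁‖ ^ 2 + ‖ω₂‖ ^ 2 = 1) (c : ℝ)
    (hc : c * (1 + (inner ℝ ω₁ ω₂ : ℝ)) = (inner ℝ ω₁ (v₂ - v₁) : ℝ) + (inner ℝ ω₂ (v₃ - v₁) : ℝ)) :
    ‖v₁ + c • (ω₁ + ω₂)‖ ^ 2 + ‖v₂ - c • ω₁‖ ^ 2 + ‖v₃ - c • ω₂‖ ^ 2
      = ‖v₁‖ ^ 2 + ‖v₂‖ ^ 2 + ‖v₃‖ ^ 2 := by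
  simp only [← real_inner_self_eq_norm_sq] at hω ⊢
  simp only [inner_add_left, inner_add_right, inner_sub_left, inner_sub_right,
    real_inner_smul_left, real_inner_smul_right] at hc ⊢
  simp only [real_inner_comm v₁ ω₁, real_inner_comm v₁ ω₂, real_inner_comm v₂ ω₁,
    real_inner_comm v₂ ω₂, real_inner_comm v₃ ω₁, real_inner_comm v₃ ω₂,
    real_inner_comm ω₂ ω₁] at *
  linear_combination (2 * c) * hc + (2 * c ^ 2) * hω

/-- The key scalar computation: the collision flips the sign of the cross-section. -/
lemma ternary_flip (v₁ v₂ v₃ : EuclideanSpace ℝ (Fin d)) (hω : ‖ω₁‖ ^ 2 + ‖ω₂‖ ^ 2 = 1) (c : ℝ)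
    (hc : c * (1 + (inner ℝ ω₁ ω₂ : ℝ)) = (inner ℝ ω₁ (v₂ - v₁) : ℝ) + (inner ℝ ω₂ (v₃ - v₁) : ℝ)) :
    (inner ℝ ω₁ ((v₂ - c • ω₁) - (v₁ + c • (ω₁ + ω₂))) : ℝ) +
      (inner ℝ ω₂ ((v₃ - c • ω₂) - (v₁ + c • (ω₁ + ω₂))) : ℝ)
      = -((inner ℝ ω₁ (v₂ - v₁) : ℝ) + (inner ℝ ω₂ (v₃ - v₁) : ℝ)) := by
  simp only [← real_inner_self_eq_norm_sq] at hω
  simp only [inner_add_left, inner_add_right, inner_sub_left, inner_sub_right,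
    real_inner_smul_left, real_inner_smul_right] at hc ⊢
  simp only [real_inner_comm ω₂ ω₁] at *
  linear_combination (-2) * hc + (-2 * c) * hω

/-- Sum of pairwise squared distances in terms of norms and the total sum. -/
lemma ternary_pairwise (a b c : EuclideanSpace ℝ (Fin d)) :
    ‖a - b‖ ^ 2 + ‖a - c‖ ^ 2 + ‖b - c‖ ^ 2
      = 3 * (‖a‖ ^ 2 + ‖b‖ ^ 2 + ‖c‖ ^ 2) - ‖a + b + c‖ ^ 2 := by
  simp only [← real_inner_self_eq_norm_sq]
  simp only [inner_add_left, inner_add_right, inner_sub_left, inner_sub_right]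
  simp only [real_inner_comm b a, real_inner_comm c a, real_inner_comm c b]
  ring

/-- `T_{ω₁,ω₂}` is an involution. -/
lemma ternaryT_invol (hω : ‖ω₁‖ ^ 2 + ‖ω₂‖ ^ 2 = 1) :
    (ternaryT ω₁ ω₂) ∘ (ternaryT ω₁ ω₂) = id := by
  have hden := ternary_den_pos ω₁ ω₂ hω
  funext p
  obtain ⟨p₁, p₂, p₃⟩ := p
  simp only [Function.comp_apply, id_eq, ternaryT_apply]
  set k : ℝ := (inner ℝ ω₁ ω₂ : ℝ) with hk
  set N : ℝ := (inner ℝ ω₁ (p₂ - p₁) : ℝ) + (inner ℝ ω₂ (p₃ - p₁) : ℝ) with hN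
  set c : ℝ := N / (1 + k) with hcdef
  have hc : c * (1 + k) = N := div_mul_cancel₀ _ hden.ne'
  have hnum := ternary_flip ω₁ ω₂ p₁ p₂ p₃ hω c hc
  rw [← hN] at hnum
  rw [hnum, neg_div, ← hcdef]
  simp only [Prod.mk.injEq]
  refine ⟨?_, ?_, ?_⟩ <;> module

end Aux

theorem stmt_1 (d : ℕ) (hd : 2 ≤ d)
    (ω₁ ω₂ : EuclideanSpace ℝ (Fin d)) (hω : ‖ω₁‖ ^ 2 + ‖ω₂‖ ^ 2 = 1)
    (v₁ v₂ v₃ : EuclideanSpace ℝ (Fin d)) :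
    -- (i) conservation of momentum
    (ternaryT ω₁ ω₂ (v₁, v₂, v₃)).1 + (ternaryT ω₁ ω₂ (v₁, v₂, v₃)).2.1 +
        (ternaryT ω₁ ω₂ (v₁, v₂, v₃)).2.2 = v₁ + v₂ + v₃ ∧
    -- (ii) conservation of energy
    ‖(ternaryT ω₁ ω₂ (v₁, v₂, v₃)).1‖ ^ 2 + ‖(ternaryT ω₁ ω₂ (v₁, v₂, v₃)).2.1‖ ^ 2 +
        ‖(ternaryT ω₁ ω₂ (v₁, v₂, v₃)).2.2‖ ^ 2 = ‖v₁‖ ^ 2 + ‖v₂‖ ^ 2 + ‖v₃‖ ^ 2 ∧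
    -- (iii) conservation of relative velocity magnitudes
    ‖(ternaryT ω₁ ω₂ (v₁, v₂, v₃)).1 - (ternaryT ω₁ ω₂ (v₁, v₂, v₃)).2.1‖ ^ 2 +
        ‖(ternaryT ω₁ ω₂ (v₁, v₂, v₃)).1 - (ternaryT ω₁ ω₂ (v₁, v₂, v₃)).2.2‖ ^ 2 +
        ‖(ternaryT ω₁ ω₂ (v₁, v₂, v₃)).2.1 - (ternaryT ω₁ ω₂ (v₁, v₂, v₃)).2.2‖ ^ 2 =
      ‖v₁ - v₂‖ ^ 2 + ‖v₁ - v₃‖ ^ 2 + ‖v₂ - v₃‖ ^ 2 ∧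
    -- (iv) micro-reversibility of the ternary cross-section
    ternaryB ω₁ ω₂ ((ternaryT ω₁ ω₂ (v₁, v₂, v₃)).2.1 - (ternaryT ω₁ ω₂ (v₁, v₂, v₃)).1)
        ((ternaryT ω₁ ω₂ (v₁, v₂, v₃)).2.2 - (ternaryT ω₁ ω₂ (v₁, v₂, v₃)).1) =
      -ternaryB ω₁ ω₂ (v₂ - v₁) (v₃ - v₁) ∧
    -- (v) `T_{ω₁,ω₂}` is a linear involution, it has determinant of absolute value 1,
    -- and it preserves the Lebesgue measure on ℝ^{3d}
    (ternaryT ω₁ ω₂) ∘ (ternaryT ω₁ ω₂) = id ∧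
    (∃ L : (EuclideanSpace ℝ (Fin d) × EuclideanSpace ℝ (Fin d) × EuclideanSpace ℝ (Fin d)) →ₗ[ℝ]
        (EuclideanSpace ℝ (Fin d) × EuclideanSpace ℝ (Fin d) × EuclideanSpace ℝ (Fin d)),
      ⇑L = ternaryT ω₁ ω₂ ∧ |LinearMap.det L| = 1) ∧
    MeasurePreserving (ternaryT ω₁ ω₂) volume volume := by
  have hden := ternary_den_pos ω₁ ω₂ hω
  set k : ℝ := (inner ℝ ω₁ ω₂ : ℝ) with hk
  set N : ℝ := (inner ℝ ω₁ (v₂ - v₁) : ℝ) + (inner ℝ ω₂ (v₃ - v₁) : ℝ) with hN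
  set c : ℝ := N / (1 + k) with hcdef
  have hc : c * (1 + k) = N := div_mul_cancel₀ _ hden.ne'
  -- the linear map
  have hTadd : ∀ p q, ternaryT ω₁ ω₂ (p + q) = ternaryT ω₁ ω₂ p + ternaryT ω₁ ω₂ q := by
    rintro ⟨p₁, p₂, p₃⟩ ⟨q₁, q₂, q₃⟩
    show ternaryT ω₁ ω₂ (p₁ + q₁, p₂ + q₂, p₃ + q₃) = _
    simp only [ternaryT_apply, Prod.mk_add_mk, Prod.mk.injEq]
    have e1 : (inner ℝ ω₁ (p₂ + q₂ - (p₁ + q₁)) : ℝ) + (inner ℝ ω₂ (p₃ + q₃ - (p₁ + q₁)) : ℝ)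
        = ((inner ℝ ω₁ (p₂ - p₁) : ℝ) + (inner ℝ ω₂ (p₃ - p₁) : ℝ))
          + ((inner ℝ ω₁ (q₂ - q₁) : ℝ) + (inner ℝ ω₂ (q₃ - q₁) : ℝ)) := by
      simp only [inner_add_right, inner_sub_right]; ring
    rw [e1, add_div]
    refine ⟨?_, ?_, ?_⟩ <;> module
  have hTsmul : ∀ (r : ℝ) p, ternaryT ω₁ ω₂ (r • p) = r • ternaryT ω₁ ω₂ p := by
    rintro r ⟨p₁, p₂, p₃⟩
    show ternaryT ω₁ ω₂ (r • p₁, r • p₂, r • p₃) = _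
    simp only [ternaryT_apply, Prod.smul_mk, Prod.mk.injEq]
    have e1 : (inner ℝ ω₁ (r • p₂ - r • p₁) : ℝ) + (inner ℝ ω₂ (r • p₃ - r • p₁) : ℝ)
        = r * ((inner ℝ ω₁ (p₂ - p₁) : ℝ) + (inner ℝ ω₂ (p₃ - p₁) : ℝ)) := by
      simp only [inner_sub_right, real_inner_smul_right]; ring
    rw [e1, mul_div_assoc]
    refine ⟨?_, ?_, ?_⟩ <;> module
  set L : (EuclideanSpace ℝ (Fin d) × EuclideanSpace ℝ (Fin d) × EuclideanSpace ℝ (Fin d)) →ₗ[ℝ]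
      (EuclideanSpace ℝ (Fin d) × EuclideanSpace ℝ (Fin d) × EuclideanSpace ℝ (Fin d)) :=
    { toFun := ternaryT ω₁ ω₂, map_add' := hTadd, map_smul' := hTsmul } with hLdef
  have hL : ⇑L = ternaryT ω₁ ω₂ := rfl
  have hinvol : (ternaryT ω₁ ω₂) ∘ (ternaryT ω₁ ω₂) = id := ternaryT_invol ω₁ ω₂ hω
  have hLL : L.comp L = LinearMap.id := by
    apply LinearMap.ext; intro p
    have := congrFun hinvol p
    simpa [hL] using this
  have hdet2 : LinearMap.det L * LinearMap.det L = 1 := by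
    rw [← LinearMap.det_comp, hLL, LinearMap.det_id]
  have hdet : |LinearMap.det L| = 1 := by
    rcases mul_self_eq_one_iff.mp hdet2 with h | h <;> simp [h]
  have hdetne : LinearMap.det L ≠ 0 := by
    intro h; rw [h] at hdet2; norm_num at hdet2
  -- measure preservation
  haveI hb : BorelSpace (EuclideanSpace ℝ (Fin d) × EuclideanSpace ℝ (Fin d) ×
      EuclideanSpace ℝ (Fin d)) := Prod.borelSpace
  haveI h2 : Measure.IsAddHaarMeasure
      (volume : Measure (EuclideanSpace ℝ (Fin d) × EuclideanSpace ℝ (Fin d))) :=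
    Measure.prod.instIsAddHaarMeasure _ _
  haveI h3 : Measure.IsAddHaarMeasure (volume : Measure (EuclideanSpace ℝ (Fin d) ×
      EuclideanSpace ℝ (Fin d) × EuclideanSpace ℝ (Fin d))) :=
    Measure.prod.instIsAddHaarMeasure _ _
  have hmap : Measure.map (ternaryT ω₁ ω₂) volume = volume := by
    rw [← hL, Measure.map_linearMap_addHaar_eq_smul_addHaar _ hdetne]
    rw [abs_inv, hdet]
    norm_num
  have hmp : MeasurePreserving (ternaryT ω₁ ω₂) volume volume :=
    ⟨by rw [← hL]; exact L.continuous_of_finiteDimensional.measurable, hmap⟩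
  -- (i)
  have hmom : (ternaryT ω₁ ω₂ (v₁, v₂, v₃)).1 + (ternaryT ω₁ ω₂ (v₁, v₂, v₃)).2.1 +
      (ternaryT ω₁ ω₂ (v₁, v₂, v₃)).2.2 = v₁ + v₂ + v₃ := by
    simp only [ternaryT_apply, ← hN, ← hk, ← hcdef]
    module
  have hen : ‖(ternaryT ω₁ ω₂ (v₁, v₂, v₃)).1‖ ^ 2 + ‖(ternaryT ω₁ ω₂ (v₁, v₂, v₃)).2.1‖ ^ 2 +
      ‖(ternaryT ω₁ ω₂ (v₁, v₂, v₃)).2.2‖ ^ 2 = ‖v₁‖ ^ 2 + ‖v₂‖ ^ 2 + ‖v₃‖ ^ 2 := by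
    simp only [ternaryT_apply, ← hN, ← hk, ← hcdef]
    exact ternary_energy ω₁ ω₂ v₁ v₂ v₃ hω c (by rw [hc, hN])
  refine ⟨hmom, hen, ?_, ?_, hinvol, ⟨L, hL, hdet⟩, hmp⟩
  · -- (iii)
    rw [ternary_pairwise, ternary_pairwise, hmom, hen]
  · -- (iv)
    simp only [ternaryT_apply, ← hN, ← hk, ← hcdef, ternaryB]
    exact ternary_flip ω₁ ω₂ v₁ v₂ v₃ hω c (by rw [hc, hN])
end

section
/- Let d ≥ 2 be an integer and R ≥ 1. There is a constant C > 0, depending only on d and R, such that for all δ > 0 and all 0 < σ₂ < σ₃ < 1 with 4δR ≤ σ₂, the following hold. (i) For every a ∈ ℝ^d, the Lebesgue measure of {x ∈ ℝ^d : σ₂ ≤ |x − a| ≤ σ₂ + 2δR} is at most Cδ. (ii) For all a, b ∈ ℝ^d, the Lebesgue measure of each of the sets {x ∈ ℝ^d : 2σ₃² ≤ |x − a|² + |x − b|² ≤ (√2 σ₃ + 4δR)²} and {x ∈ ℝ^d : 2σ₃² ≤ |a − x|² + |a − b|² ≤ (√2 σ₃ + 4δR)²} is at most Cδ. -/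
set_option maxHeartbeats 1000000

open MeasureTheory Metric

private lemma pow_sub_pow_le_aux {x y : ℝ} (n : ℕ) (hn : 2 ≤ n) (hy : 0 ≤ y) (hxy : y ≤ x) :
    x ^ n - y ^ n ≤ (n : ℝ) * x ^ (n - 2) * (x ^ 2 - y ^ 2) := by
  have hx : 0 ≤ x := hy.trans hxy
  have h1 : x ^ n - y ^ n = (∑ i ∈ Finset.range n, x ^ i * y ^ (n - 1 - i)) * (x - y) :=
    (geom_sum₂_mul x y n).symm
  have h2 : (∑ i ∈ Finset.range n, x ^ i * y ^ (n - 1 - i)) ≤ (n : ℝ) * x ^ (n - 1) := by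
    calc (∑ i ∈ Finset.range n, x ^ i * y ^ (n - 1 - i))
        ≤ ∑ i ∈ Finset.range n, x ^ i * x ^ (n - 1 - i) := by
          apply Finset.sum_le_sum; intro i hi
          exact mul_le_mul_of_nonneg_left (pow_le_pow_left₀ hy hxy _) (pow_nonneg hx _)
      _ = ∑ _i ∈ Finset.range n, x ^ (n - 1) := by
          apply Finset.sum_congr rfl; intro i hi
          rw [← pow_add]
          congr 1
          have := Finset.mem_range.mp hi
          omega
      _ = (n : ℝ) * x ^ (n - 1) := by
          rw [Finset.sum_const, Finset.card_range, nsmul_eq_mul]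
  have hxmy : 0 ≤ x - y := sub_nonneg.mpr hxy
  calc x ^ n - y ^ n = (∑ i ∈ Finset.range n, x ^ i * y ^ (n - 1 - i)) * (x - y) := h1
    _ ≤ ((n : ℝ) * x ^ (n - 1)) * (x - y) := mul_le_mul_of_nonneg_right h2 hxmy
    _ = (n : ℝ) * x ^ (n - 2) * (x * (x - y)) := by
        rw [show n - 1 = (n - 2) + 1 by omega, pow_succ]; ring
    _ ≤ (n : ℝ) * x ^ (n - 2) * (x ^ 2 - y ^ 2) := by
        apply mul_le_mul_of_nonneg_left _ (by positivity)
        nlinarith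

private lemma shell_bound {d : ℕ} (hd : 2 ≤ d) (c : EuclideanSpace ℝ (Fin d)) {s₁ s₂ : ℝ}
    (h12 : s₁ ≤ s₂) (hs2 : s₂ ≤ 9) :
    volume {x : EuclideanSpace ℝ (Fin d) | s₁ ≤ ‖x - c‖ ^ 2 ∧ ‖x - c‖ ^ 2 ≤ s₂}
      ≤ ENNReal.ofReal ((d : ℝ) * 3 ^ (d - 2) *
          (volume (ball (0 : EuclideanSpace ℝ (Fin d)) 1)).toReal * (s₂ - s₁)) := by
  haveI : Nontrivial (EuclideanSpace ℝ (Fin d)) :=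
    Module.nontrivial_of_finrank_pos (R := ℝ) (by rw [finrank_euclideanSpace_fin]; omega)
  set K : ℝ := (volume (ball (0 : EuclideanSpace ℝ (Fin d)) 1)).toReal with hK
  have hKnn : 0 ≤ K := ENNReal.toReal_nonneg
  set r₁ : ℝ := Real.sqrt (max s₁ 0) with hr₁
  set r₂ : ℝ := Real.sqrt (max s₂ 0) with hr₂
  have hr₁nn : 0 ≤ r₁ := Real.sqrt_nonneg _
  have hr₂nn : 0 ≤ r₂ := Real.sqrt_nonneg _
  have hr12 : r₁ ≤ r₂ := Real.sqrt_le_sqrt (max_le_max h12 le_rfl)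
  have hr₁sq : r₁ ^ 2 = max s₁ 0 := Real.sq_sqrt (le_max_right _ _)
  have hr₂sq : r₂ ^ 2 = max s₂ 0 := Real.sq_sqrt (le_max_right _ _)
  have hr₂3 : r₂ ≤ 3 := by
    rw [hr₂, show (3 : ℝ) = Real.sqrt 9 by
      rw [show (9 : ℝ) = 3 ^ 2 by norm_num, Real.sqrt_sq]; norm_num]
    exact Real.sqrt_le_sqrt (max_le hs2 (by norm_num))
  -- subset of the annulus
  have hsub : {x : EuclideanSpace ℝ (Fin d) | s₁ ≤ ‖x - c‖ ^ 2 ∧ ‖x - c‖ ^ 2 ≤ s₂}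
      ⊆ closedBall c r₂ \ ball c r₁ := by
    intro x hx
    obtain ⟨hx1, hx2⟩ := hx
    have hnx : ‖x - c‖ = Real.sqrt (‖x - c‖ ^ 2) := (Real.sqrt_sq (norm_nonneg _)).symm
    constructor
    · rw [mem_closedBall, dist_eq_norm, hnx]
      exact Real.sqrt_le_sqrt (le_max_of_le_left hx2)
    · rw [mem_ball, dist_eq_norm, not_lt, hnx]
      exact Real.sqrt_le_sqrt (max_le hx1 (sq_nonneg _))
  have hballsub : ball c r₁ ⊆ closedBall c r₂ :=
    ball_subset_closedBall.trans (closedBall_subset_closedBall hr12)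
  have hVeq : volume (ball (0 : EuclideanSpace ℝ (Fin d)) 1) = ENNReal.ofReal K :=
    (ENNReal.ofReal_toReal measure_ball_lt_top.ne).symm
  have hdiff : volume (closedBall c r₂ \ ball c r₁)
      ≤ ENNReal.ofReal ((r₂ ^ d - r₁ ^ d) * K) := by
    rw [measure_diff hballsub measurableSet_ball.nullMeasurableSet measure_ball_lt_top.ne,
      Measure.addHaar_closedBall volume c hr₂nn, Measure.addHaar_ball volume c hr₁nn,
      finrank_euclideanSpace_fin, hVeq, ← ENNReal.ofReal_mul (pow_nonneg hr₂nn _),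
      ← ENNReal.ofReal_mul (pow_nonneg hr₁nn _), ← ENNReal.ofReal_sub _
        (mul_nonneg (pow_nonneg hr₁nn _) hKnn)]
    exact ENNReal.ofReal_le_ofReal (le_of_eq (by ring))
  have hpow : r₂ ^ d - r₁ ^ d ≤ (d : ℝ) * 3 ^ (d - 2) * (s₂ - s₁) := by
    have h1 : r₂ ^ d - r₁ ^ d ≤ (d : ℝ) * r₂ ^ (d - 2) * (r₂ ^ 2 - r₁ ^ 2) :=
      pow_sub_pow_le_aux d hd hr₁nn hr12
    have h2 : r₂ ^ 2 - r₁ ^ 2 ≤ s₂ - s₁ := by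
      rw [hr₁sq, hr₂sq]
      rcases le_total s₁ 0 with h | h <;> rcases le_total s₂ 0 with h' | h' <;>
        simp [max_eq_left, max_eq_right, *] <;> linarith
    have h3 : 0 ≤ r₂ ^ 2 - r₁ ^ 2 := sub_nonneg.mpr (pow_le_pow_left₀ hr₁nn hr12 2)
    have h4 : (d : ℝ) * r₂ ^ (d - 2) ≤ (d : ℝ) * 3 ^ (d - 2) :=
      mul_le_mul_of_nonneg_left (pow_le_pow_left₀ hr₂nn hr₂3 _) (Nat.cast_nonneg d)
    calc r₂ ^ d - r₁ ^ d ≤ (d : ℝ) * r₂ ^ (d - 2) * (r₂ ^ 2 - r₁ ^ 2) := h1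
      _ ≤ (d : ℝ) * 3 ^ (d - 2) * (s₂ - s₁) := by
          apply mul_le_mul h4 h2 h3 (by positivity)
  calc volume {x : EuclideanSpace ℝ (Fin d) | s₁ ≤ ‖x - c‖ ^ 2 ∧ ‖x - c‖ ^ 2 ≤ s₂}
      ≤ volume (closedBall c r₂ \ ball c r₁) := measure_mono hsub
    _ ≤ ENNReal.ofReal ((r₂ ^ d - r₁ ^ d) * K) := hdiff
    _ ≤ ENNReal.ofReal ((d : ℝ) * 3 ^ (d - 2) * K * (s₂ - s₁)) := by
        apply ENNReal.ofReal_le_ofReal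
        calc (r₂ ^ d - r₁ ^ d) * K ≤ ((d : ℝ) * 3 ^ (d - 2) * (s₂ - s₁)) * K :=
              mul_le_mul_of_nonneg_right hpow hKnn
          _ = (d : ℝ) * 3 ^ (d - 2) * K * (s₂ - s₁) := by ring

theorem stmt_2 (d : ℕ) (hd : 2 ≤ d) (R : ℝ) (hR : 1 ≤ R) :
    ∃ C > 0, ∀ δ σ₂ σ₃ : ℝ, 0 < δ → 0 < σ₂ → σ₂ < σ₃ → σ₃ < 1 → 4 * δ * R ≤ σ₂ →
      -- (i) spherical shells have measure at most C δ
      (∀ a : EuclideanSpace ℝ (Fin d),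
        volume {x : EuclideanSpace ℝ (Fin d) | σ₂ ≤ ‖x - a‖ ∧ ‖x - a‖ ≤ σ₂ + 2 * δ * R}
          ≤ ENNReal.ofReal (C * δ)) ∧
      -- (ii) "ternary" shells have measure at most C δ
      (∀ a b : EuclideanSpace ℝ (Fin d),
        volume {x : EuclideanSpace ℝ (Fin d) |
            2 * σ₃ ^ 2 ≤ ‖x - a‖ ^ 2 + ‖x - b‖ ^ 2 ∧
            ‖x - a‖ ^ 2 + ‖x - b‖ ^ 2 ≤ (Real.sqrt 2 * σ₃ + 4 * δ * R) ^ 2}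
          ≤ ENNReal.ofReal (C * δ) ∧
        volume {x : EuclideanSpace ℝ (Fin d) |
            2 * σ₃ ^ 2 ≤ ‖a - x‖ ^ 2 + ‖a - b‖ ^ 2 ∧
            ‖a - x‖ ^ 2 + ‖a - b‖ ^ 2 ≤ (Real.sqrt 2 * σ₃ + 4 * δ * R) ^ 2}
          ≤ ENNReal.ofReal (C * δ)) := by
  classical
  set E := EuclideanSpace ℝ (Fin d)
  set K : ℝ := (volume (ball (0 : E) 1)).toReal with hKdef
  haveI : Nontrivial E :=
    Module.nontrivial_of_finrank_pos (R := ℝ) (by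
      rw [show Module.finrank ℝ E = d from finrank_euclideanSpace_fin]; omega)
  have hKpos : 0 < K := by
    apply ENNReal.toReal_pos
    · exact (measure_ball_pos volume 0 one_pos).ne'
    · exact measure_ball_lt_top.ne
  have hd0 : (0 : ℝ) < (d : ℝ) := Nat.cast_pos.mpr (by omega)
  have hB : (0 : ℝ) < (d : ℝ) * 3 ^ (d - 2) * K :=
    mul_pos (mul_pos hd0 (by positivity)) hKpos
  have hR0 : (0 : ℝ) < R := lt_of_lt_of_le one_pos hR
  refine ⟨(d : ℝ) * 3 ^ (d - 2) * K * (16 * R), mul_pos hB (by linarith), ?_⟩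
  intro δ σ₂ σ₃ hδ hσ₂ h23 h31 h4δ
  have hδR : 0 < δ * R := by positivity
  have hs2 : Real.sqrt 2 ^ 2 = 2 := Real.sq_sqrt (by norm_num)
  have hs2nn : 0 ≤ Real.sqrt 2 := Real.sqrt_nonneg 2
  have hs2le : Real.sqrt 2 ≤ 3 / 2 := by nlinarith [sq_nonneg (Real.sqrt 2 - 3 / 2)]
  have hσ₃ : 0 < σ₃ := hσ₂.trans h23
  have hδR1 : δ * R ≤ 1 / 4 := by linarith
  have hσ₃1 : σ₃ ^ 2 ≤ 1 := by nlinarith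
  have hss : Real.sqrt 2 * σ₃ ≤ 3 / 2 := by nlinarith
  have hexp : (Real.sqrt 2 * σ₃ + 4 * δ * R) ^ 2
      = 2 * σ₃ ^ 2 + 8 * (Real.sqrt 2 * σ₃ * (δ * R)) + 16 * (δ * R) ^ 2 := by
    rw [add_sq, mul_pow, hs2]; ring
  have hprod : 0 ≤ Real.sqrt 2 * σ₃ * (δ * R) := by positivity
  have p1 : Real.sqrt 2 * σ₃ * (δ * R) ≤ 3 / 2 * (1 / 4) :=
    mul_le_mul hss hδR1 hδR.le (by norm_num)
  have p2 : (δ * R) ^ 2 ≤ 1 / 4 * (δ * R) := by nlinarith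
  have p3 : Real.sqrt 2 * σ₃ * (δ * R) ≤ 3 / 2 * (δ * R) :=
    mul_le_mul_of_nonneg_right hss hδR.le
  -- the generic final step
  have final : ∀ s₁ s₂ : ℝ, s₁ ≤ s₂ → s₂ ≤ 9 → s₂ - s₁ ≤ 16 * R * δ →
      ∀ c : E, volume {x : E | s₁ ≤ ‖x - c‖ ^ 2 ∧ ‖x - c‖ ^ 2 ≤ s₂}
        ≤ ENNReal.ofReal ((d : ℝ) * 3 ^ (d - 2) * K * (16 * R) * δ) := by
    intro s₁ s₂ h12 h9 hdiff c
    refine (shell_bound hd c h12 h9).trans (ENNReal.ofReal_le_ofReal ?_)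
    calc (d : ℝ) * 3 ^ (d - 2) * K * (s₂ - s₁)
        ≤ (d : ℝ) * 3 ^ (d - 2) * K * (16 * R * δ) :=
          mul_le_mul_of_nonneg_left hdiff hB.le
      _ = (d : ℝ) * 3 ^ (d - 2) * K * (16 * R) * δ := by ring
  constructor
  · -- part (i)
    intro a
    have hsub : {x : E | σ₂ ≤ ‖x - a‖ ∧ ‖x - a‖ ≤ σ₂ + 2 * δ * R}
        ⊆ {x : E | σ₂ ^ 2 ≤ ‖x - a‖ ^ 2 ∧ ‖x - a‖ ^ 2 ≤ (σ₂ + 2 * δ * R) ^ 2} := by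
      intro x ⟨h1, h2⟩
      exact ⟨pow_le_pow_left₀ hσ₂.le h1 2, pow_le_pow_left₀ (norm_nonneg _) h2 2⟩
    refine (measure_mono hsub).trans (final _ _ ?_ ?_ ?_ a)
    · nlinarith
    · nlinarith
    · nlinarith
  · -- part (ii)
    intro a b
    constructor
    · -- first ternary shell
      set m : E := (2⁻¹ : ℝ) • (a + b) with hm
      have key : ∀ x : E, ‖x - a‖ ^ 2 + ‖x - b‖ ^ 2
          = 2 * ‖x - m‖ ^ 2 + ‖a - b‖ ^ 2 / 2 := by
        intro x
        have hpar := parallelogram_law_with_norm ℝ (x - a) (x - b)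
        have e1 : (x - a) + (x - b) = (2 : ℝ) • (x - m) := by
          rw [hm]; module
        have e2 : (x - a) - (x - b) = -(a - b) := by abel
        have e3 : ‖(2 : ℝ) • (x - m)‖ = 2 * ‖x - m‖ := by
          rw [norm_smul]; simp
        rw [e1, e2, e3, norm_neg] at hpar
        nlinarith [hpar]
      set k : ℝ := ‖a - b‖ ^ 2 with hk
      have hknn : 0 ≤ k := sq_nonneg _
      have hsub : {x : E | 2 * σ₃ ^ 2 ≤ ‖x - a‖ ^ 2 + ‖x - b‖ ^ 2 ∧
            ‖x - a‖ ^ 2 + ‖x - b‖ ^ 2 ≤ (Real.sqrt 2 * σ₃ + 4 * δ * R) ^ 2}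
          ⊆ {x : E | σ₃ ^ 2 - k / 4 ≤ ‖x - m‖ ^ 2 ∧
            ‖x - m‖ ^ 2 ≤ ((Real.sqrt 2 * σ₃ + 4 * δ * R) ^ 2 - k / 2) / 2} := by
        intro x ⟨h1, h2⟩
        rw [key x] at h1 h2
        constructor <;> [linarith; linarith]
      refine (measure_mono hsub).trans (final _ _ ?_ ?_ ?_ m)
      · linarith [hexp, hprod, sq_nonneg (δ * R)]
      · linarith [hexp, hknn, p1, p2, hσ₃1, hδR.le]
      · linarith [hexp, p3, p2, hδR.le]
    · -- second ternary shell
      set k : ℝ := ‖a - b‖ ^ 2 with hk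
      have hknn : 0 ≤ k := sq_nonneg _
      have hsub : {x : E | 2 * σ₃ ^ 2 ≤ ‖a - x‖ ^ 2 + ‖a - b‖ ^ 2 ∧
            ‖a - x‖ ^ 2 + ‖a - b‖ ^ 2 ≤ (Real.sqrt 2 * σ₃ + 4 * δ * R) ^ 2}
          ⊆ {x : E | 2 * σ₃ ^ 2 - k ≤ ‖x - a‖ ^ 2 ∧
            ‖x - a‖ ^ 2 ≤ (Real.sqrt 2 * σ₃ + 4 * δ * R) ^ 2 - k} := by
        intro x ⟨h1, h2⟩
        rw [norm_sub_rev a x] at h1 h2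
        constructor <;> [linarith; linarith]
      refine (measure_mono hsub).trans (final _ _ ?_ ?_ ?_ a)
      · linarith [hexp, hprod, sq_nonneg (δ * R)]
      · linarith [hexp, hknn, p1, p2, hσ₃1, hδR.le]
      · linarith [hexp, p3, p2, hδR.le]
end

section
/- Let d ≥ 2 be an integer. There is a constant c ∈ (0,1), depending only on d, with the following property. Let R > 1 and 0 < δ, η, ε₀, α, ε₃ < 1 satisfy α ≤ c ε₀, ε₀ ≤ c η δ, R α ≤ c η ε₀ and ε₃ ≤ c α. Let ȳ₁, ȳ₂ ∈ ℝ^d with |ȳ₁ − ȳ₂| > ε₀ and let v₁ ∈ B_R^d. Then there exists a solid cylinder K of radius η in ℝ^d such that for every y₁ with |y₁ − ȳ₁| ≤ α, every y₂ with |y₂ − ȳ₂| ≤ α, and every v₂ ∈ B_R^d \ K: (i) |y₁ − y₂ − t(v₁ − v₂)| > √2 ε₃ for all t ≥ 0; (ii) |y₁ − y₂ − t(v₁ − v₂)| > ε₀ for all t ≥ δ. -/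
open MeasureTheory

/-- `K` is a solid cylinder of radius `η` in ℝ^d: the set of points at distance at most `η`
from some affine line. -/
def IsSolidCylinder {d : ℕ} (η : ℝ) (K : Set (EuclideanSpace ℝ (Fin d))) : Prop :=
  ∃ p u : EuclideanSpace ℝ (Fin d), u ≠ 0 ∧
    K = {x | Metric.infDist x {y | ∃ t : ℝ, y = p + t • u} ≤ η}

set_option maxHeartbeats 1000000 in
theorem stmt_12 (d : ℕ) (hd : 2 ≤ d) :
    ∃ c : ℝ, 0 < c ∧ c < 1 ∧
      ∀ R δ η ε₀ α ε₃ : ℝ,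
        1 < R → 0 < δ → δ < 1 → 0 < η → η < 1 → 0 < ε₀ → ε₀ < 1 → 0 < α → α < 1 →
        0 < ε₃ → ε₃ < 1 →
        α ≤ c * ε₀ → ε₀ ≤ c * (η * δ) → R * α ≤ c * (η * ε₀) → ε₃ ≤ c * α →
        ∀ ybar₁ ybar₂ v₁ : EuclideanSpace ℝ (Fin d),
          ε₀ < ‖ybar₁ - ybar₂‖ → v₁ ∈ Metric.closedBall (0 : EuclideanSpace ℝ (Fin d)) R →
          ∃ K : Set (EuclideanSpace ℝ (Fin d)), IsSolidCylinder η K ∧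
            ∀ y₁ y₂ v₂ : EuclideanSpace ℝ (Fin d),
              ‖y₁ - ybar₁‖ ≤ α → ‖y₂ - ybar₂‖ ≤ α →
              v₂ ∈ Metric.closedBall (0 : EuclideanSpace ℝ (Fin d)) R \ K →
              (∀ t : ℝ, 0 ≤ t → Real.sqrt 2 * ε₃ < ‖y₁ - y₂ - t • (v₁ - v₂)‖) ∧
              (∀ t : ℝ, δ ≤ t → ε₀ < ‖y₁ - y₂ - t • (v₁ - v₂)‖) := by
  refine ⟨1/16, by norm_num, by norm_num, ?_⟩
  intro R δ η ε₀ α ε₃ hR hδ hδ1 hη hη1 hε₀ hε₀1 hα hα1 hε₃ hε₃1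
  intro hαε₀ hε₀ηδ hRα hε₃α ybar₁ ybar₂ v₁ hw hv₁
  have hwne : ybar₁ - ybar₂ ≠ 0 := by
    intro h
    rw [h, norm_zero] at hw
    linarith
  refine ⟨{x | Metric.infDist x {y | ∃ t : ℝ, y = v₁ + t • (ybar₁ - ybar₂)} ≤ η},
    ⟨v₁, ybar₁ - ybar₂, hwne, rfl⟩, ?_⟩
  intro y₁ y₂ v₂ hy₁ hy₂ hv₂
  obtain ⟨hv₂ball, hv₂K⟩ := hv₂
  have hinf : η < Metric.infDist v₂ {y | ∃ t : ℝ, y = v₁ + t • (ybar₁ - ybar₂)} := by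
    simpa using not_le.mp hv₂K
  have hdist : ∀ s : ℝ, η < ‖v₂ - (v₁ + s • (ybar₁ - ybar₂))‖ := by
    intro s
    have hmem : v₁ + s • (ybar₁ - ybar₂) ∈
        {y | ∃ t : ℝ, y = v₁ + t • (ybar₁ - ybar₂)} := ⟨s, rfl⟩
    have h2 := Metric.infDist_le_dist_of_mem (x := v₂) hmem
    rw [dist_eq_norm] at h2
    linarith
  have hyw : ‖(y₁ - y₂) - (ybar₁ - ybar₂)‖ ≤ 2 * α := by
    have e : (y₁ - y₂) - (ybar₁ - ybar₂) = (y₁ - ybar₁) - (y₂ - ybar₂) := by abel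
    calc ‖(y₁ - y₂) - (ybar₁ - ybar₂)‖ = ‖(y₁ - ybar₁) - (y₂ - ybar₂)‖ := by rw [e]
      _ ≤ ‖y₁ - ybar₁‖ + ‖y₂ - ybar₂‖ := norm_sub_le _ _
      _ ≤ 2 * α := by linarith
  have hynorm : ε₀ - 2 * α < ‖y₁ - y₂‖ := by
    have h1 := norm_sub_norm_le (ybar₁ - ybar₂) (y₁ - y₂)
    have h2 : ‖(ybar₁ - ybar₂) - (y₁ - y₂)‖ = ‖(y₁ - y₂) - (ybar₁ - ybar₂)‖ :=
      norm_sub_rev _ _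
    linarith
  have hv₁n : ‖v₁‖ ≤ R := by rwa [Metric.mem_closedBall, dist_zero_right] at hv₁
  have hv₂n : ‖v₂‖ ≤ R := by rwa [Metric.mem_closedBall, dist_zero_right] at hv₂ball
  have hun : ‖v₁ - v₂‖ ≤ 2 * R := by
    calc ‖v₁ - v₂‖ ≤ ‖v₁‖ + ‖v₂‖ := norm_sub_le _ _
      _ ≤ 2 * R := by linarith
  -- key bound A : for t > 0, t*η - 2*α < ‖(y₁ - y₂) - t • (v₁ - v₂)‖
  have keyA : ∀ t : ℝ, 0 < t → t * η - 2 * α < ‖y₁ - y₂ - t • (v₁ - v₂)‖ := by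
    intro t ht
    have htne : t ≠ 0 := ne_of_gt ht
    have h0 : (1 / t) * t = 1 := by field_simp
    have e : v₂ - (v₁ + (-(1 / t)) • (ybar₁ - ybar₂)) =
        (1 / t) • ((ybar₁ - ybar₂) - t • (v₁ - v₂)) := by
      rw [smul_sub (1/t) (ybar₁ - ybar₂), smul_smul, h0, one_smul,
        neg_smul (1/t) (ybar₁ - ybar₂)]
      abel
    have h1 := hdist (-(1 / t))
    rw [e, norm_smul, Real.norm_eq_abs, abs_of_pos (by positivity : (0:ℝ) < 1 / t)] at h1
    have h2 : t * η < ‖(ybar₁ - ybar₂) - t • (v₁ - v₂)‖ := by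
      have h3 := mul_lt_mul_of_pos_left h1 ht
      rw [← mul_assoc, mul_one_div, div_self htne, one_mul] at h3
      exact h3
    have h3 : ‖(ybar₁ - ybar₂) - t • (v₁ - v₂)‖ ≤
        ‖y₁ - y₂ - t • (v₁ - v₂)‖ + ‖(y₁ - y₂) - (ybar₁ - ybar₂)‖ := by
      have e2 : (ybar₁ - ybar₂) - t • (v₁ - v₂) =
          (y₁ - y₂ - t • (v₁ - v₂)) + ((ybar₁ - ybar₂) - (y₁ - y₂)) := by abel
      calc ‖(ybar₁ - ybar₂) - t • (v₁ - v₂)‖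
          = ‖(y₁ - y₂ - t • (v₁ - v₂)) + ((ybar₁ - ybar₂) - (y₁ - y₂))‖ := by rw [← e2]
        _ ≤ ‖y₁ - y₂ - t • (v₁ - v₂)‖ + ‖(ybar₁ - ybar₂) - (y₁ - y₂)‖ := norm_add_le _ _
        _ = ‖y₁ - y₂ - t • (v₁ - v₂)‖ + ‖(y₁ - y₂) - (ybar₁ - ybar₂)‖ := by
            rw [norm_sub_rev (ybar₁ - ybar₂) (y₁ - y₂)]
    linarith
  have hs2 : Real.sqrt 2 ≤ 1.5 := by
    nlinarith [Real.sq_sqrt (by norm_num : (0:ℝ) ≤ 2), Real.sqrt_nonneg 2]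
  have hs0 : 0 ≤ Real.sqrt 2 := Real.sqrt_nonneg 2
  constructor
  · intro t ht
    rcases le_or_gt (4 * R * t) ε₀ with hcase | hcase
    · -- small t : use direct lower bound on ‖y₁ - y₂‖
      have hB : ‖y₁ - y₂‖ - ‖t • (v₁ - v₂)‖ ≤ ‖y₁ - y₂ - t • (v₁ - v₂)‖ :=
        norm_sub_norm_le _ _
      have htu : ‖t • (v₁ - v₂)‖ ≤ t * (2 * R) := by
        rw [norm_smul, Real.norm_eq_abs, abs_of_nonneg ht]
        exact mul_le_mul_of_nonneg_left hun ht
      have h2Rt : t * (2 * R) ≤ ε₀ / 2 := by nlinarith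
      have hse : Real.sqrt 2 * ε₃ ≤ 1.5 * ((1/16) * ((1/16) * ε₀)) := by
        have h1 : ε₃ ≤ (1/16) * ((1/16) * ε₀) := by nlinarith
        nlinarith [mul_nonneg (sub_nonneg.mpr hs2) hε₃.le]
      nlinarith
    · -- larger t : use cylinder bound
      have ht0 : 0 < t := by nlinarith
      have hA := keyA t ht0
      have hR0 : (0:ℝ) < R := by linarith
      have h1 : ε₀ * η < 4 * R * t * η := by nlinarith
      have h2 : Real.sqrt 2 * ε₃ * R ≤ 1.5 * ((1/16) * ((1/16) * (η * ε₀))) := by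
        have h3 : ε₃ * R ≤ (1/16) * (α * R) := by nlinarith
        have h4 : α * R ≤ (1/16) * (η * ε₀) := by nlinarith
        nlinarith [mul_nonneg (sub_nonneg.mpr hs2) (mul_nonneg hε₃.le (by linarith : (0:ℝ) ≤ R))]
      have h5 : Real.sqrt 2 * ε₃ * R < (t * η - 2 * α) * R := by nlinarith
      have h6 : Real.sqrt 2 * ε₃ < t * η - 2 * α :=
        lt_of_mul_lt_mul_right h5 (le_of_lt hR0)
      linarith
  · intro t ht
    have ht0 : 0 < t := lt_of_lt_of_le hδ ht
    have hA := keyA t ht0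
    have h1 : δ * η ≤ t * η := by nlinarith
    have h2 : 16 * ε₀ ≤ η * δ := by linarith
    nlinarith
end

section
/- Let d ≥ 2 and s ≥ 1 be integers. There exist constants c ∈ (0,1), depending only on d, and C > 0, depending only on d and s, with the following property. Let R > 1 and 0 < δ, η, ε₀, α < 1 satisfy α ≤ c ε₀, ε₀ ≤ c η δ, R α ≤ c η ε₀, and let 0 < ε₂ ≤ c ε₃ with ε₃ ≤ c α. Then for every X_s = (x₁,…,x_s) ∈ Δ_s^X(ε₀) there is a measurable set M ⊆ B_R^{ds} with Lebesgue measure at most C R^{ds} η^{(d-1)/2}, such that for every V_s = (v₁,…,v_s) ∈ B_R^{ds} \ M the configuration Z_s = (X_s, V_s) belongs to G_s(ε₃, 0) ∩ G_s(ε₀, δ). -/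
open MeasureTheory

noncomputable section

/-- ℝ^d. -/
abbrev Euc (d : ℕ) := EuclideanSpace ℝ (Fin d)

/-- The set of good configurations `G_m(θ, t₀)`. -/
def GoodConfig {d m : ℕ} (θ t₀ : ℝ) (x v : Fin m → Euc d) : Prop :=
  ∀ t : ℝ, t₀ ≤ t → ∀ i j : Fin m, i < j → θ < ‖(x i - t • v i) - (x j - t • v j)‖

end

open scoped RealInnerProductSpace ENNReal

section AuxLemmas

lemma projPerp_norm_le {d : ℕ} (u w : Euc d) (hu : ‖u‖ = 1) :
    ‖w - ⟪u, w⟫ • u‖ ≤ ‖w‖ := by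
  have h : ‖w - ⟪u, w⟫ • u‖ ^ 2 = ‖w‖ ^ 2 - ⟪u, w⟫ ^ 2 := by
    rw [norm_sub_sq_real, real_inner_smul_right, norm_smul, hu]
    rw [real_inner_comm w u]
    simp [Real.norm_eq_abs, sq_abs]
    ring
  nlinarith [norm_nonneg (w - ⟪u, w⟫ • u), norm_nonneg w, sq_nonneg (⟪u, w⟫ : ℝ)]

lemma coord_abs_le_norm {d : ℕ} (y : EuclideanSpace ℝ (Fin d)) (k : Fin d) :
    |y k| ≤ ‖y‖ := by
  rw [EuclideanSpace.norm_eq]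
  calc |y k| = Real.sqrt (‖y k‖ ^ 2) := by
        rw [Real.sqrt_sq_eq_abs]; simp [Real.norm_eq_abs]
    _ ≤ _ := by
        apply Real.sqrt_le_sqrt
        exact Finset.single_le_sum (f := fun i => ‖y i‖ ^ 2)
          (fun i _ => by positivity) (Finset.mem_univ k)

lemma slab_vol {d : ℕ} (hd : 1 ≤ d) (r ρ : ℝ) (hr : 0 ≤ r) (hρ : 0 ≤ ρ)
    (u : Euc d) (hu : ‖u‖ = 1) :
    volume {w : Euc d | ‖w‖ ≤ r ∧ ‖w - ⟪u, w⟫ • u‖ ≤ ρ}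
      ≤ ENNReal.ofReal ((2 * r) * (2 * ρ) ^ (d - 1)) := by
  have i0 : Fin d := ⟨0, by omega⟩
  have hcard : Module.finrank ℝ (Euc d) = Fintype.card (Fin d) := by
    simp [finrank_euclideanSpace]
  have horth : Orthonormal ℝ (Set.restrict {i0} (fun _ : Fin d => u)) := by
    constructor
    · intro i; exact hu
    · intro i j hij
      exact absurd (Subtype.ext (by
        have hi := i.2; have hj := j.2
        simp only [Set.mem_singleton_iff] at hi hj
        rw [hi, hj])) hij
  obtain ⟨b, hb⟩ := Orthonormal.exists_orthonormalBasis_extension_of_card_eq hcard horth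
  have hbu : b i0 = u := hb i0 rfl
  set f : Fin d → ℝ := fun k => if k = i0 then r else ρ with hf
  set pibox : Set (Fin d → ℝ) := Set.pi Set.univ (fun k => Set.Icc (-(f k)) (f k)) with hpibox
  set boxE : Set (EuclideanSpace ℝ (Fin d)) :=
    ((MeasurableEquiv.toLp 2 (Fin d → ℝ)).symm) ⁻¹' pibox with hboxE
  have hmem : ∀ z : EuclideanSpace ℝ (Fin d), z ∈ boxE ↔ ∀ k, |z k| ≤ f k := by
    intro z
    have h0 : z ∈ boxE ↔ ∀ k, z k ∈ Set.Icc (-(f k)) (f k) := by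
      rw [hboxE, Set.mem_preimage, hpibox, Set.mem_univ_pi]; exact Iff.rfl
    simp only [h0, Set.mem_Icc, abs_le]
  have hsub : {w : Euc d | ‖w‖ ≤ r ∧ ‖w - ⟪u, w⟫ • u‖ ≤ ρ}
      ⊆ (b.measurableEquiv) ⁻¹' boxE := by
    rintro w ⟨h1, h2⟩
    have hbw : (b.measurableEquiv w : EuclideanSpace ℝ (Fin d)) = b.repr w := rfl
    rw [Set.mem_preimage, hbw, hmem]
    intro k
    by_cases hk : k = i0
    · subst hk
      simp only [f, if_pos rfl]
      exact le_trans (coord_abs_le_norm _ _) (by rw [b.repr.norm_map]; exact h1)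
    · simp only [f, if_neg hk]
      have key : (b.repr (w - ⟪u, w⟫ • u)) k = (b.repr w) k := by
        rw [map_sub, _root_.map_smul, ← hbu, b.repr_self]
        simp [EuclideanSpace.single_apply, hk]
      calc |(b.repr w) k| = |(b.repr (w - ⟪u, w⟫ • u)) k| := by rw [key]
        _ ≤ ‖b.repr (w - ⟪u, w⟫ • u)‖ := coord_abs_le_norm _ _
        _ ≤ ρ := by rw [b.repr.norm_map]; exact h2
  have hpiboxMeas : MeasurableSet pibox :=
    MeasurableSet.univ_pi (fun k => measurableSet_Icc)
  have hboxEMeas : MeasurableSet boxE :=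
    ((MeasurableEquiv.toLp 2 (Fin d → ℝ)).symm).measurable hpiboxMeas
  calc volume {w : Euc d | ‖w‖ ≤ r ∧ ‖w - ⟪u, w⟫ • u‖ ≤ ρ}
      ≤ volume ((b.measurableEquiv) ⁻¹' boxE) := measure_mono hsub
    _ = volume boxE := b.measurePreserving_measurableEquiv.measure_preimage
        hboxEMeas.nullMeasurableSet
    _ = volume pibox := (EuclideanSpace.volume_preserving_symm_measurableEquiv_toLp
        (Fin d)).measure_preimage hpiboxMeas.nullMeasurableSet
    _ = ∏ k, ENNReal.ofReal (2 * f k) := by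
        rw [hpibox, volume_pi_pi]
        congr 1; funext k
        rw [Real.volume_Icc]; congr 1; ring
    _ ≤ ENNReal.ofReal ((2 * r) * (2 * ρ) ^ (d - 1)) := by
        rw [← Finset.mul_prod_erase Finset.univ _ (Finset.mem_univ i0)]
        have h1 : ∀ k ∈ Finset.univ.erase i0, ENNReal.ofReal (2 * f k)
            = ENNReal.ofReal (2 * ρ) := by
          intro k hk
          rw [Finset.mem_erase] at hk
          simp [f, hk.1]
        rw [Finset.prod_congr rfl h1, Finset.prod_const, Finset.card_erase_of_mem
          (Finset.mem_univ i0), Finset.card_univ, Fintype.card_fin]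
        simp only [f, if_pos rfl]
        rw [← ENNReal.ofReal_pow (by positivity), ← ENNReal.ofReal_mul (by positivity)]

lemma pairSet_closed {d m : ℕ} (R η : ℝ) (u : Euc d) (i j : Fin m) :
    IsClosed {v : Fin m → Euc d |
      (∀ k, ‖v k‖ ≤ R) ∧ ‖(v i - v j) - ⟪u, v i - v j⟫ • u‖ ≤ η} := by
  have hA2 : {v : Fin m → Euc d |
      (∀ k, ‖v k‖ ≤ R) ∧ ‖(v i - v j) - ⟪u, v i - v j⟫ • u‖ ≤ η}
      = (⋂ k, {v : Fin m → Euc d | ‖v k‖ ≤ R}) ∩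
        {v : Fin m → Euc d | ‖(v i - v j) - ⟪u, v i - v j⟫ • u‖ ≤ η} := by
    ext v; simp [Set.mem_iInter]
  rw [hA2]
  apply IsClosed.inter
  · exact isClosed_iInter fun k =>
      isClosed_le ((continuous_apply k).norm) continuous_const
  · have hc : Continuous fun v : Fin m → Euc d => v i - v j :=
      (continuous_apply i).sub (continuous_apply j)
    exact isClosed_le ((hc.sub (((continuous_const (y := u)).inner (𝕜 := ℝ) hc).smul
      continuous_const)).norm) continuous_const

lemma pair_vol {d n : ℕ} (hd : 1 ≤ d) (R η : ℝ) (hR : 0 ≤ R) (hη : 0 ≤ η)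
    (u : Euc d) (hu : ‖u‖ = 1) (i j : Fin (n + 1)) (hij : j ≠ i) :
    volume {v : Fin (n + 1) → Euc d |
        (∀ k, ‖v k‖ ≤ R) ∧ ‖(v i - v j) - ⟪u, v i - v j⟫ • u‖ ≤ η}
      ≤ ENNReal.ofReal ((2 * (2 * R)) * (2 * η) ^ (d - 1))
          * (volume (Metric.closedBall (0 : Euc d) R)) ^ n := by
  set A : Set (Fin (n + 1) → Euc d) := {v |
      (∀ k, ‖v k‖ ≤ R) ∧ ‖(v i - v j) - ⟪u, v i - v j⟫ • u‖ ≤ η} with hA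
  have hAmeas : MeasurableSet A := (pairSet_closed R η u i j).measurableSet
  set e := MeasurableEquiv.piFinSuccAbove (fun _ : Fin (n + 1) => Euc d) i with he
  set S : Set (Euc d × (Fin n → Euc d)) := e.symm ⁻¹' A with hS
  have hSmeas : MeasurableSet S := e.symm.measurable hAmeas
  have hvol : volume A = volume S := by
    have h1 : A = e ⁻¹' S := by
      rw [hS, ← Set.preimage_comp]
      simp
    rw [h1]
    exact (volume_preserving_piFinSuccAbove (fun _ : Fin (n + 1) => Euc d) i).measure_preimage
      hSmeas.nullMeasurableSet
  obtain ⟨j', hj'⟩ := Fin.exists_succAbove_eq hij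
  set K : ℝ≥0∞ := ENNReal.ofReal ((2 * (2 * R)) * (2 * η) ^ (d - 1)) with hK
  set ballpi : Set (Fin n → Euc d) := Set.pi Set.univ
    (fun _ => Metric.closedBall (0 : Euc d) R) with hballpi
  have hballmeas : MeasurableSet ballpi :=
    MeasurableSet.univ_pi fun _ => measurableSet_closedBall
  have hsection : ∀ rest : Fin n → Euc d,
      volume ((fun w => (w, rest)) ⁻¹' S) ≤ ballpi.indicator (fun _ => K) rest := by
    intro rest
    have hmemS : ∀ w : Euc d, (w, rest) ∈ S ↔ i.insertNth w rest ∈ A := by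
      intro w
      rw [hS, Set.mem_preimage]
      congr! 1
    by_cases hrest : rest ∈ ballpi
    · rw [Set.indicator_of_mem hrest]
      set c : Euc d := rest j' with hc
      have hcR : ‖c‖ ≤ R := by
        have h' := hrest j' (Set.mem_univ j')
        simpa [hc] using mem_closedBall_zero_iff.mp h'
      have hsub : (fun w => (w, rest)) ⁻¹' S ⊆
          (fun w : Euc d => w - c) ⁻¹' {w : Euc d | ‖w‖ ≤ 2 * R ∧ ‖w - ⟪u, w⟫ • u‖ ≤ η} := by
        intro w hw
        rw [Set.mem_preimage, hmemS] at hw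
        obtain ⟨hw1, hw2⟩ := hw
        set g : Fin (n + 1) → Euc d := i.insertNth w rest with hg
        have hgi : g i = w := by simp [hg]
        have hgj : g j = c := by rw [← hj']; simp [hg, hc]
        have hwR : ‖w‖ ≤ R := by have := hw1 i; rwa [hgi] at this
        constructor
        · calc ‖w - c‖ ≤ ‖w‖ + ‖c‖ := norm_sub_le _ _
            _ ≤ 2 * R := by linarith
        · rw [hgi, hgj] at hw2; exact hw2
      calc volume ((fun w => (w, rest)) ⁻¹' S)
          ≤ volume ((fun w : Euc d => w - c) ⁻¹'
            {w : Euc d | ‖w‖ ≤ 2 * R ∧ ‖w - ⟪u, w⟫ • u‖ ≤ η}) := measure_mono hsub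
        _ = volume {w : Euc d | ‖w‖ ≤ 2 * R ∧ ‖w - ⟪u, w⟫ • u‖ ≤ η} := by
            simp only [sub_eq_add_neg]
            exact measure_preimage_add_right volume (-c) _
        _ ≤ K := slab_vol hd (2 * R) η (by linarith) hη u hu
    · rw [Set.indicator_of_notMem hrest]
      have hempty : ((fun w => (w, rest)) ⁻¹' S) = (∅ : Set (Euc d)) := by
        ext w
        simp only [Set.mem_preimage, Set.mem_empty_iff_false, iff_false]
        intro hw
        rw [hmemS] at hw
        apply hrest
        intro k _
        have hk := hw.1 (i.succAbove k)
        rw [Fin.insertNth_apply_succAbove] at hk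
        exact mem_closedBall_zero_iff.mpr hk
      rw [hempty, measure_empty]
  calc volume A = volume S := hvol
    _ = (volume : Measure (Euc d)).prod volume S := by rw [← Measure.volume_eq_prod]
    _ = ∫⁻ rest, volume ((fun w => (w, rest)) ⁻¹' S) ∂volume :=
        Measure.prod_apply_symm hSmeas
    _ ≤ ∫⁻ rest, ballpi.indicator (fun _ => K) rest ∂volume := lintegral_mono hsection
    _ = K * volume ballpi := lintegral_indicator_const hballmeas K
    _ = K * (volume (Metric.closedBall (0 : Euc d) R)) ^ n := by
        rw [hballpi, volume_pi_pi, Finset.prod_const, Finset.card_univ, Fintype.card_fin]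

lemma pointwise_good {d : ℕ} (R δ η ε₀ ε₃ : ℝ) (hR : 1 < R) (hδ : 0 < δ)
    (hη : 0 < η) (hε₃ : 0 < ε₃)
    (h1 : ε₃ ≤ ε₀ / 4) (h2 : 4 * R * ε₃ ≤ η * ε₀) (h3 : ε₀ < δ * η)
    (X W : Euc d) (hX : ε₀ < ‖X‖) (hW : ‖W‖ ≤ 2 * R)
    (hperp : η < ‖W - ⟪(‖X‖⁻¹ • X : Euc d), W⟫ • (‖X‖⁻¹ • X : Euc d)‖) :
    (∀ t : ℝ, 0 ≤ t → ε₃ < ‖X - t • W‖) ∧ (∀ t : ℝ, δ ≤ t → ε₀ < ‖X - t • W‖) := by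
  have hε₀ : 0 < ε₀ := by linarith
  have hXne : X ≠ 0 := by
    intro h; rw [h, norm_zero] at hX; linarith
  set u : Euc d := ‖X‖⁻¹ • X with hudef
  have hu : ‖u‖ = 1 := norm_smul_inv_norm hXne
  have hXnorm : (0 : ℝ) < ‖X‖ := by linarith
  have hXu : (⟪u, X⟫ : ℝ) • u = X := by
    have h4 : (⟪u, X⟫ : ℝ) = ‖X‖ := by
      rw [hudef, real_inner_smul_left, real_inner_self_eq_norm_sq]
      field_simp
    rw [h4, hudef, smul_smul]
    rw [mul_inv_cancel₀ (ne_of_gt hXnorm), one_smul]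
  set PW : Euc d := W - ⟪u, W⟫ • u with hPW
  have key : ∀ t : ℝ, 0 ≤ t → t * ‖PW‖ ≤ ‖X - t • W‖ := by
    intro t ht
    have hid : (X - t • W) - ⟪u, X - t • W⟫ • u = (-t) • PW := by
      rw [inner_sub_right, real_inner_smul_right, hPW]
      rw [sub_smul, smul_smul]
      nth_rewrite 1 [← hXu]
      module
    calc t * ‖PW‖ = ‖(-t) • PW‖ := by
          rw [norm_smul, Real.norm_eq_abs, abs_neg, abs_of_nonneg ht]
      _ = ‖(X - t • W) - ⟪u, X - t • W⟫ • u‖ := by rw [hid]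
      _ ≤ ‖X - t • W‖ := projPerp_norm_le u _ hu
  have hPWη : η < ‖PW‖ := hperp
  constructor
  · intro t ht
    rcases le_or_gt (t * (2 * R)) (ε₀ - ε₃) with hcase | hcase
    · have hn1 : ‖X‖ - ‖t • W‖ ≤ ‖X - t • W‖ := norm_sub_norm_le _ _
      have hn2 : ‖t • W‖ ≤ t * (2 * R) := by
        rw [norm_smul, Real.norm_eq_abs, abs_of_nonneg ht]
        exact mul_le_mul_of_nonneg_left hW ht
      linarith
    · have ht0 : 0 < t := by nlinarith
      have h5 : ε₃ < t * η := by nlinarith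
      have h6 : t * η ≤ t * ‖PW‖ := mul_le_mul_of_nonneg_left hPWη.le ht0.le
      have h7 := key t ht
      linarith
  · intro t ht
    have ht0 : 0 < t := lt_of_lt_of_le hδ ht
    have h5 : δ * η ≤ t * η := mul_le_mul_of_nonneg_right ht hη.le
    have h6 : t * η ≤ t * ‖PW‖ := mul_le_mul_of_nonneg_left hPWη.le ht0.le
    have h7 := key t ht0.le
    linarith

end AuxLemmas

set_option maxHeartbeats 2000000 in
theorem stmt_15 (d s : ℕ) (hd : 2 ≤ d) (hs : 1 ≤ s) :
    ∃ c : ℝ, 0 < c ∧ c < 1 ∧ ∃ C > 0,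
      ∀ R δ η ε₀ α ε₂ ε₃ : ℝ,
        1 < R → 0 < δ → δ < 1 → 0 < η → η < 1 → 0 < ε₀ → ε₀ < 1 → 0 < α → α < 1 →
        α ≤ c * ε₀ → ε₀ ≤ c * (η * δ) → R * α ≤ c * (η * ε₀) →
        0 < ε₂ → ε₂ ≤ c * ε₃ → ε₃ ≤ c * α →
        ∀ x : Fin s → Euc d, (∀ i j : Fin s, i < j → ε₀ < ‖x i - x j‖) →
          ∃ M : Set (Fin s → Euc d), MeasurableSet M ∧
            M ⊆ {v : Fin s → Euc d | ∑ i, ‖v i‖ ^ 2 ≤ R ^ 2} ∧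
            volume M ≤ ENNReal.ofReal (C * R ^ (d * s) * η ^ (((d : ℝ) - 1) / 2)) ∧
            ∀ v : Fin s → Euc d, (∑ i, ‖v i‖ ^ 2 ≤ R ^ 2) → v ∉ M →
              GoodConfig ε₃ 0 x v ∧ GoodConfig ε₀ δ x v := by
  obtain ⟨n, rfl⟩ : ∃ n, s = n + 1 := ⟨s - 1, (Nat.succ_pred_eq_of_pos hs).symm⟩
  have hd1 : 1 ≤ d := by omega
  set v1 : ℝ := (volume (Metric.ball (0 : Euc d) 1)).toReal with hv1def
  have hv1nonneg : 0 ≤ v1 := ENNReal.toReal_nonneg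
  refine ⟨1/2, by norm_num, by norm_num,
    ((n : ℝ) + 1) ^ 2 * (4 * 2 ^ (d - 1)) * (v1 + 1) ^ n, by positivity, ?_⟩
  set C : ℝ := ((n : ℝ) + 1) ^ 2 * (4 * 2 ^ (d - 1)) * (v1 + 1) ^ n with hCdef
  intro R δ η ε₀ α ε₂ ε₃ hR hδ hδ1 hη hη1 hε₀ hε₀1 hα hα1 hαc hε₀c hRαc hε₂ hε₂c hε₃c
  intro x hx
  have hR0 : (0 : ℝ) < R := by linarith
  have hε₃pos : 0 < ε₃ := by linarith
  -- derived real inequalities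
  have h1 : ε₃ ≤ ε₀ / 4 := by linarith
  have h2 : 4 * R * ε₃ ≤ η * ε₀ := by nlinarith
  have h3 : ε₀ < δ * η := by nlinarith
  -- the unit vectors
  set u : Fin (n+1) → Fin (n+1) → Euc d :=
    fun i j => ‖x i - x j‖⁻¹ • (x i - x j) with hudef
  have hxne : ∀ i j : Fin (n+1), i < j → x i - x j ≠ 0 := by
    intro i j hij h0
    have := hx i j hij
    rw [h0, norm_zero] at this
    linarith
  have hunit : ∀ i j : Fin (n+1), i < j → ‖u i j‖ = 1 := by
    intro i j hij
    exact norm_smul_inv_norm (hxne i j hij)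
  -- the bad sets
  set N : Fin (n+1) → Fin (n+1) → Set (Fin (n+1) → Euc d) := fun i j =>
    if i < j then {v : Fin (n+1) → Euc d |
      (∀ k, ‖v k‖ ≤ R) ∧ ‖(v i - v j) - ⟪u i j, v i - v j⟫ • u i j‖ ≤ η}
    else ∅ with hNdef
  have hNmeas : ∀ i j, MeasurableSet (N i j) := by
    intro i j
    simp only [hNdef]
    by_cases hij : i < j
    · rw [if_pos hij]; exact (pairSet_closed R η (u i j) i j).measurableSet
    · rw [if_neg hij]; exact MeasurableSet.empty
  set ballS : Set (Fin (n+1) → Euc d) := {v | ∑ i, ‖v i‖ ^ 2 ≤ R ^ 2} with hballS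
  have hballmeas : MeasurableSet ballS := by
    apply measurableSet_le _ measurable_const
    exact Finset.measurable_sum _ fun i _ => ((measurable_pi_apply i).norm.pow_const 2)
  set M : Set (Fin (n+1) → Euc d) := ballS ∩ ⋃ i, ⋃ j, N i j with hMdef
  have hMmeas : MeasurableSet M :=
    hballmeas.inter (MeasurableSet.iUnion fun i => MeasurableSet.iUnion fun j => hNmeas i j)
  refine ⟨M, hMmeas, Set.inter_subset_left, ?_, ?_⟩
  · -- volume bound
    set B : ℝ≥0∞ := ENNReal.ofReal ((2 * (2 * R)) * (2 * η) ^ (d - 1))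
      * (ENNReal.ofReal (R ^ d * v1)) ^ n with hBdef
    have hv1top : volume (Metric.ball (0 : Euc d) 1) ≠ ⊤ :=
      measure_ball_lt_top.ne
    have hballvol : volume (Metric.closedBall (0 : Euc d) R)
        = ENNReal.ofReal (R ^ d * v1) := by
      rw [Measure.addHaar_closedBall _ _ hR0.le, finrank_euclideanSpace, Fintype.card_fin]
      rw [ENNReal.ofReal_mul (by positivity)]
      congr 1
      exact (ENNReal.ofReal_toReal hv1top).symm
    have hNB : ∀ i j, volume (N i j) ≤ B := by
      intro i j
      simp only [hNdef]
      by_cases hij : i < j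
      · rw [if_pos hij]
        have := pair_vol hd1 R η hR0.le hη.le (u i j) (hunit i j hij) i j
          (ne_of_lt hij).symm
        rwa [hballvol] at this
      · rw [if_neg hij]; simp
    have hM1 : volume M ≤ (((n+1 : ℕ)) : ℝ≥0∞) * ((((n+1 : ℕ)) : ℝ≥0∞) * B) := by
      calc volume M ≤ volume (⋃ i, ⋃ j, N i j) := measure_mono Set.inter_subset_right
        _ ≤ ∑' i : Fin (n+1), volume (⋃ j, N i j) := measure_iUnion_le _
        _ ≤ ∑' i : Fin (n+1), ∑' j : Fin (n+1), volume (N i j) :=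
            ENNReal.tsum_le_tsum fun i => measure_iUnion_le _
        _ ≤ ∑' _i : Fin (n+1), ∑' _j : Fin (n+1), B :=
            ENNReal.tsum_le_tsum fun i => ENNReal.tsum_le_tsum fun j => hNB i j
        _ = (((n+1 : ℕ)) : ℝ≥0∞) * ((((n+1 : ℕ)) : ℝ≥0∞) * B) := by
            simp [tsum_fintype, Finset.sum_const, Finset.card_univ, nsmul_eq_mul]
    have hkey : ((n:ℝ) + 1) * (((n:ℝ) + 1)
          * ((2 * (2 * R)) * (2 * η) ^ (d - 1) * (R ^ d * v1) ^ n))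
        ≤ C * R ^ (d * (n + 1)) * η ^ (((d : ℝ) - 1) / 2) := by
      have hη_r0 : (0:ℝ) ≤ η ^ (((d : ℝ) - 1) / 2) := Real.rpow_nonneg hη.le _
      have hηpow : η ^ (d - 1) ≤ η ^ (((d : ℝ) - 1) / 2) := by
        rw [← Real.rpow_natCast η (d - 1)]
        apply Real.rpow_le_rpow_of_exponent_ge hη hη1.le
        rw [Nat.cast_sub hd1]
        have h2d : (2:ℝ) ≤ d := by exact_mod_cast hd
        push_cast
        linarith
      have hv1pow : (R ^ d * v1) ^ n ≤ R ^ (d * n) * (v1 + 1) ^ n := by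
        rw [mul_pow, ← pow_mul]
        exact mul_le_mul_of_nonneg_left
          (pow_le_pow_left₀ hv1nonneg (by linarith) n) (by positivity)
      have hRpow : R * R ^ (d * n) ≤ R ^ (d * (n + 1)) := by
        rw [← pow_succ']
        exact pow_le_pow_right₀ hR.le (by rw [Nat.mul_succ]; omega)
      calc ((n:ℝ) + 1) * (((n:ℝ) + 1)
            * ((2 * (2 * R)) * (2 * η) ^ (d - 1) * (R ^ d * v1) ^ n))
          = ((n:ℝ) + 1) ^ 2 * 4 * 2 ^ (d-1) * (η ^ (d-1)) * (R * (R ^ d * v1) ^ n) := by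
            rw [mul_pow]; ring
        _ ≤ ((n:ℝ) + 1) ^ 2 * 4 * 2 ^ (d-1) * (η ^ (((d:ℝ)-1)/2))
              * (R * (R ^ (d*n) * (v1+1) ^ n)) := by
            apply mul_le_mul
            · exact mul_le_mul_of_nonneg_left hηpow (by positivity)
            · exact mul_le_mul_of_nonneg_left hv1pow (by linarith)
            · positivity
            · positivity
        _ = ((n:ℝ) + 1) ^ 2 * 4 * 2 ^ (d-1) * (v1+1) ^ n * (R * R ^ (d*n))
              * (η ^ (((d:ℝ)-1)/2)) := by ring
        _ ≤ ((n:ℝ) + 1) ^ 2 * 4 * 2 ^ (d-1) * (v1+1) ^ n * R ^ (d*(n+1))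
              * (η ^ (((d:ℝ)-1)/2)) := by
            exact mul_le_mul_of_nonneg_right
              (mul_le_mul_of_nonneg_left hRpow (by positivity)) hη_r0
        _ = C * R ^ (d * (n + 1)) * η ^ (((d : ℝ) - 1) / 2) := by rw [hCdef]; ring
    calc volume M ≤ (((n+1 : ℕ)) : ℝ≥0∞) * ((((n+1 : ℕ)) : ℝ≥0∞) * B) := hM1
      _ = ENNReal.ofReal (((n:ℝ) + 1) * (((n:ℝ) + 1)
            * ((2 * (2 * R)) * (2 * η) ^ (d - 1) * (R ^ d * v1) ^ n))) := by
          have hcast : (((n+1 : ℕ)) : ℝ≥0∞) = ENNReal.ofReal ((n:ℝ) + 1) := by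
            rw [← ENNReal.ofReal_natCast (n+1)]
            norm_num
          have hBof : B = ENNReal.ofReal
              ((2 * (2 * R)) * (2 * η) ^ (d - 1) * (R ^ d * v1) ^ n) := by
            rw [hBdef, ← ENNReal.ofReal_pow (by positivity),
              ← ENNReal.ofReal_mul (by positivity)]
          rw [hcast, hBof, ← ENNReal.ofReal_mul (by positivity),
            ← ENNReal.ofReal_mul (by positivity)]
      _ ≤ ENNReal.ofReal (C * R ^ (d * (n + 1)) * η ^ (((d : ℝ) - 1) / 2)) :=
          ENNReal.ofReal_le_ofReal hkey
  · -- good config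
    intro v hv hvM
    have hknorm : ∀ k, ‖v k‖ ≤ R := by
      intro k
      have hle : ‖v k‖ ^ 2 ≤ R ^ 2 :=
        le_trans (Finset.single_le_sum (f := fun i => ‖v i‖ ^ 2)
          (fun i _ => by positivity) (Finset.mem_univ k)) hv
      nlinarith [norm_nonneg (v k)]
    have hnotN : ∀ i j, v ∉ N i j := by
      intro i j hij
      exact hvM ⟨hv, Set.mem_iUnion.mpr ⟨i, Set.mem_iUnion.mpr ⟨j, hij⟩⟩⟩
    have hmain : ∀ i j : Fin (n+1), i < j →
        (∀ t : ℝ, 0 ≤ t → ε₃ < ‖(x i - x j) - t • (v i - v j)‖) ∧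
        (∀ t : ℝ, δ ≤ t → ε₀ < ‖(x i - x j) - t • (v i - v j)‖) := by
      intro i j hij
      have hperp : η < ‖(v i - v j) - ⟪u i j, v i - v j⟫ • u i j‖ := by
        have hn := hnotN i j
        simp only [hNdef, if_pos hij] at hn
        simp only [Set.mem_setOf_eq, not_and, not_le] at hn
        exact hn hknorm
      have hWnorm : ‖v i - v j‖ ≤ 2 * R := by
        calc ‖v i - v j‖ ≤ ‖v i‖ + ‖v j‖ := norm_sub_le _ _
          _ ≤ 2 * R := by linarith [hknorm i, hknorm j]
      exact pointwise_good R δ η ε₀ ε₃ hR hδ hη hε₃pos h1 h2 h3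
        (x i - x j) (v i - v j) (hx i j hij) hWnorm hperp
    constructor
    · intro t ht i j hij
      have heq : (x i - t • v i) - (x j - t • v j)
          = (x i - x j) - t • (v i - v j) := by module
      rw [heq]
      exact (hmain i j hij).1 t ht
    · intro t ht i j hij
      have heq : (x i - t • v i) - (x j - t • v j)
          = (x i - x j) - t • (v i - v j) := by module
      rw [heq]
      exact (hmain i j hij).2 t ht
end
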